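/- Let C be a category and F₀, F₁ : C → Cat functors with a natural transformation α : F₀ ⇒ F₁. Then the induced functor on Grothendieck constructions ∫α : ∫F₀ → ∫F₁ over C is an equivalence of categories if and only if α_c : F₀(c) → F₁(c) is an equivalence of categories for every object c of C. -/

import Mathlib

open CategoryTheory

universe v u v₂ u₂

section Helpers
variable {C : Type u} [Category.{v} C] {F : C ⥤ Cat.{v₂, u₂}}

private def grothIsoOfFiberIso {c : C} {x y : F.obj c} (e : x ≅ y) :
    (⟨c, x⟩ : Grothendieck F) ≅ ⟨c, y⟩ where
  hom := ⟨𝟙 c, eqToHom (by simp) ≫ e.hom⟩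
  inv := ⟨𝟙 c, eqToHom (by simp) ≫ e.inv⟩
  hom_inv_id := by
    apply Grothendieck.ext _ _ (by simp)
    rw [Grothendieck.comp_fiber]
    simp only [Functor.congr_hom (congrArg Cat.Hom.toFunctor (F.map_id c)), Cat.Hom.id_map, eqToHom_map]
    simp
    erw [eqToHom_trans_assoc, eqToHom_trans]
  inv_hom_id := by
    apply Grothendieck.ext _ _ (by simp)
    rw [Grothendieck.comp_fiber]
    simp only [Functor.congr_hom (congrArg Cat.Hom.toFunctor (F.map_id c)), Cat.Hom.id_map, eqToHom_map]
    simp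
    erw [eqToHom_trans_assoc, eqToHom_trans]

private lemma isIso_fiber {A B : Grothendieck F} (e : A ≅ B) : IsIso e.hom.fiber := by
  have hvu : e.inv.base ≫ e.hom.base = 𝟙 B.base := by
    rw [← Grothendieck.comp_base, e.inv_hom_id]; rfl
  have huv : e.hom.base ≫ e.inv.base = 𝟙 A.base := by
    rw [← Grothendieck.comp_base, e.hom_inv_id]; rfl
  have w : F.map e.inv.base ≫ F.map e.hom.base = 𝟙 (F.obj B.base) := by
    rw [← F.map_comp, hvu, F.map_id]
  have h₂ : B.fiber = (F.map e.hom.base).toFunctor.obj ((F.map e.inv.base).toFunctor.obj B.fiber) :=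
    (Functor.congr_obj (congrArg Cat.Hom.toFunctor w) B.fiber).symm
  have eq1 := Grothendieck.congr e.inv_hom_id
  rw [Grothendieck.comp_fiber, Grothendieck.id_fiber] at eq1
  have eq2 := Grothendieck.congr e.hom_inv_id
  rw [Grothendieck.comp_fiber, Grothendieck.id_fiber] at eq2
  refine ⟨eqToHom h₂ ≫ (F.map e.hom.base).toFunctor.map e.inv.fiber, ?_, ?_⟩
  · -- f ≫ s = 𝟙
    have eq2x := congrArg (F.map e.hom.base).toFunctor.map eq2
    simp only [Functor.map_comp, eqToHom_map] at eq2x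
    have hc := Functor.congr_hom (congrArg Cat.Hom.toFunctor w) e.hom.fiber
    simp only [Cat.Hom.id_map] at hc
    rw [show (F.map e.hom.base).toFunctor.map ((F.map e.inv.base).toFunctor.map e.hom.fiber)
        = (F.map e.inv.base ≫ F.map e.hom.base).toFunctor.map e.hom.fiber from rfl, hc] at eq2x
    simp only [Category.assoc, eqToHom_trans_assoc, eqToHom_comp_iff, eqToHom_trans] at eq2x
    exact eq2x.trans (by simp)
  · -- s ≫ f = 𝟙
    rw [eqToHom_comp_iff] at eq1
    simp only [eqToHom_trans_assoc, eqToHom_trans, Category.assoc] at eq1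
    rw [Category.assoc, eq1]
    simp

variable {F₀ F₁ : C ⥤ Cat.{v₂, u₂}} (α : F₀ ⟶ F₁)

-- backward: faithful
private lemma back_faithful (h : ∀ c : C, (α.app c).toFunctor.IsEquivalence) :
    (Grothendieck.map α).Faithful := by
  constructor
  intro X Y f g hfg
  haveI := h Y.base
  have hb := congrArg Grothendieck.Hom.base hfg
  obtain ⟨fb, ff⟩ := f; obtain ⟨gb, gf⟩ := g
  subst hb
  have hf := Grothendieck.congr hfg
  simp only [Grothendieck.map_map_fiber, Cat.eqToHom_app, eqToHom_refl, Category.id_comp,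
    eqToHom_trans_assoc] at hf
  congr 1
  apply Functor.map_injective (α.app Y.base).toFunctor
  have key2 : ∀ {A A' M B : F₁.obj Y.base} (p : A = A') (u : A' ⟶ B) (q : A = M) (r : M = A')
      (v : A' ⟶ B), eqToHom p ≫ u = eqToHom q ≫ eqToHom r ≫ v → u = v := by
    intro A A' M B p u q r v e; subst q r; simpa using e
  exact key2 _ _ _ _ _ hf

-- backward: full
private lemma back_full (h : ∀ c : C, (α.app c).toFunctor.IsEquivalence) :
    (Grothendieck.map α).Full := by
  constructor
  intro X Y φ
  haveI := h Y.base
  refine ⟨⟨φ.base, (α.app Y.base).toFunctor.preimage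
    ((eqToHom (α.naturality φ.base)).toNatTrans.app X.fiber ≫ φ.fiber)⟩, ?_⟩
  apply Grothendieck.ext
  · simp [Grothendieck.map_map, Cat.eqToHom_app]
    erw [eqToHom_app, eqToHom_trans_assoc, eqToHom_trans_assoc, eqToHom_refl, Category.id_comp]
  · rfl

-- backward: essSurj
private lemma back_essSurj (h : ∀ c : C, (α.app c).toFunctor.IsEquivalence) :
    (Grothendieck.map α).EssSurj := by
  constructor
  intro Y
  haveI := h Y.base
  exact ⟨⟨Y.base, (α.app Y.base).toFunctor.objPreimage Y.fiber⟩,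
    ⟨grothIsoOfFiberIso ((α.app Y.base).toFunctor.objObjPreimageIso Y.fiber)⟩⟩

-- forward: faithful
private lemma fwd_faithful [(Grothendieck.map α).Faithful] (c : C) :
    (α.app c).toFunctor.Faithful := by
  constructor
  intro x x' f g hfg
  let φ : ∀ _f : x ⟶ x', (⟨c, x⟩ : Grothendieck F₀) ⟶ ⟨c, x'⟩ := fun _f =>
    ⟨𝟙 c, eqToHom (by erw [CategoryTheory.Functor.map_id]; rfl) ≫ _f⟩
  have key : φ f = φ g := by
    apply Functor.map_injective (Grothendieck.map α)
    apply Grothendieck.ext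
    · simp [φ, Grothendieck.map_map, Cat.eqToHom_app, eqToHom_map, hfg]
      erw [eqToHom_trans_assoc]
      rfl
    · rfl
  have hf := Grothendieck.congr key
  simp only [φ, eqToHom_refl, Category.id_comp] at hf
  rw [eqToHom_comp_iff] at hf
  simp only [eqToHom_trans_assoc] at hf
  simpa using hf

-- forward: full
private lemma fwd_full [(Grothendieck.map α).Full] [(Grothendieck.map α).Faithful] (c : C) :
    (α.app c).toFunctor.Full := by
  constructor
  intro x x' h
  let ψ : (Grothendieck.map α).obj ⟨c, x⟩ ⟶ (Grothendieck.map α).obj ⟨c, x'⟩ :=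
    ⟨𝟙 c, eqToHom (by erw [CategoryTheory.Functor.map_id]; rfl) ≫ h⟩
  set φ := (Grothendieck.map α).preimage ψ with hφ
  have hGφ : (Grothendieck.map α).map φ = ψ := (Grothendieck.map α).map_preimage ψ
  have hb : φ.base = 𝟙 c := congrArg Grothendieck.Hom.base hGφ
  refine ⟨eqToHom (by rw [hb]; erw [CategoryTheory.Functor.map_id]; rfl) ≫ φ.fiber, ?_⟩
  have hf := Grothendieck.congr hGφ
  simp only [Grothendieck.map_map_fiber, Cat.eqToHom_app, ψ] at hf
  have key3 : ∀ {A A' M A'' B : F₁.obj c} (p : A = A') (u : A' ⟶ B) (q : A = M) (r : M = A'')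
      (v : A'' ⟶ B) (s : A'' = A'), eqToHom p ≫ u = eqToHom q ≫ eqToHom r ≫ v →
      eqToHom s ≫ u = v := by
    intro A A' M A'' B p u q r v s e; subst q r s; simpa using e
  rw [Functor.map_comp, eqToHom_map]
  exact key3 _ _ _ _ _ _ hf

-- forward: essSurj
private lemma fwd_essSurj [(Grothendieck.map α).EssSurj] (c : C) :
    (α.app c).toFunctor.EssSurj := by
  constructor
  intro y
  obtain ⟨X, ⟨e⟩⟩ := (Grothendieck.map α).objObjPreimageIso (⟨c, y⟩ : Grothendieck F₁) |>
    fun i => (⟨(Grothendieck.map α).objPreimage ⟨c, y⟩, ⟨i⟩⟩ :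
      Σ' X, Nonempty ((Grothendieck.map α).obj X ≅ ⟨c, y⟩))
  haveI := isIso_fiber e
  refine ⟨(F₀.map e.hom.base).toFunctor.obj X.fiber, ⟨eqToIso ?_ ≪≫ asIso e.hom.fiber⟩⟩
  exact Functor.congr_obj (congrArg Cat.Hom.toFunctor (α.naturality e.hom.base)) X.fiber

end Helpers

/-- Given functors `F₀ F₁ : C ⥤ Cat` and a natural transformation `α : F₀ ⟶ F₁`,
the induced functor on Grothendieck constructions `∫α : ∫F₀ ⥤ ∫F₁` (over `C`) is an
equivalence of categories if and only if every component `α.app c : F₀(c) ⥤ F₁(c)` is an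
equivalence of categories. -/
theorem stmt_19 {C : Type u} [Category.{v} C] (F₀ F₁ : C ⥤ Cat.{v₂, u₂}) (α : F₀ ⟶ F₁) :
    (Grothendieck.map α).IsEquivalence ↔
      ∀ c : C, (α.app c).toFunctor.IsEquivalence := by
  constructor
  · intro hG c
    exact ⟨fwd_faithful α c, fwd_full α c, fwd_essSurj α c⟩
  · intro h
    exact ⟨back_faithful α h, back_full α h, back_essSurj α h⟩
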